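/- Let μ be a finite Borel measure on 𝒞 × 𝒞. Then for all positive integers k and r, C(C(μ,k),r) ⊆ C(μ,r), where for a set 𝒮 of k×k matrices, C(𝒮,r) := ⋃_{X ∈ 𝒮} C(X,r). In particular, C(C(S,k),r) ⊆ C(S,r) for every nonnegative square matrix S. -/

import Mathlib

open MeasureTheory Matrix
open scoped Pointwise

noncomputable section

/-- The Cantor set `{0,1}^ℕ`. -/
abbrev Cantor : Type := ℕ → Bool

/-- Cylinder set of a binary string given as a function `Fin n → Bool`. -/
def cylF {n : ℕ} (x : Fin n → Bool) : Set Cantor := {ω | ∀ i : Fin n, ω i = x i}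

/-- Cylinder set of a binary string given as a list. -/
def cyl (x : List Bool) : Set Cantor := {ω | ∀ i : Fin x.length, ω i = x.get i}

/-- `ν` is the fair coin-flipping (uniform product) measure on the Cantor set:
the unique Borel probability measure giving every cylinder of depth `n` mass `2⁻ⁿ`. -/
def IsCoinMeasure (ν : Measure Cantor) : Prop :=
  IsProbabilityMeasure ν ∧ ∀ (n : ℕ) (x : Fin n → Bool), ν (cylF x) = (1 / 2 : ENNReal) ^ n

/-- `K(k,n)`: nonnegative `k × I` matrices with all row sums `|I|/k` and all column sums `1`. -/
def Kset (k : ℕ) (I : Type) [Fintype I] : Set (Matrix (Fin k) I ℝ) :=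
  {M | (∀ i j, 0 ≤ M i j) ∧ (∀ i, ∑ j, M i j = (Fintype.card I : ℝ) / k) ∧
       (∀ j, ∑ i, M i j = 1)}

/-- The `k`-shape `C(S,k) = {M S Mᵀ : M ∈ K(k,n)}` of a square matrix `S`. -/
def matShape {I : Type} [Fintype I] (S : Matrix I I ℝ) (k : ℕ) :
    Set (Matrix (Fin k) (Fin k) ℝ) :=
  (fun M => M * S * Mᵀ) '' Kset k I

/-- `γ(S)`: the sum of all entries of `S`. -/
def gamma {I : Type} [Fintype I] (S : Matrix I I ℝ) : ℝ := ∑ i, ∑ j, S i j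

/-- The entrywise ℓ¹ norm of a matrix. -/
def l1 {k : ℕ} (A : Matrix (Fin k) (Fin k) ℝ) : ℝ := ∑ i, ∑ j, |A i j|

/-- The Hausdorff distance (w.r.t. the entrywise ℓ¹ norm) between `A` and `B` is at most `ε`. -/
def hdistLE {k : ℕ} (A B : Set (Matrix (Fin k) (Fin k) ℝ)) (ε : ℝ) : Prop :=
  (∀ X ∈ A, ∃ Y ∈ B, l1 (X - Y) ≤ ε) ∧ (∀ Y ∈ B, ∃ X ∈ A, l1 (X - Y) ≤ ε)

/-- Convergence of a sequence of shapes to `L` in the ℓ¹-Hausdorff metric. -/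
def ShapeTendsto {k : ℕ} (C : ℕ → Set (Matrix (Fin k) (Fin k) ℝ))
    (L : Set (Matrix (Fin k) (Fin k) ℝ)) : Prop :=
  ∀ ε : ℝ, 0 < ε → ∃ N : ℕ, ∀ n ≥ N, hdistLE (C n) L ε

/-- `C₀(μ,k)`: matrices `M` with `M i j = ∫ fᵢ(x) fⱼ(y) dμ` for a measurable partition of unity
`f₁,…,f_k` with `∫ fᵢ dν = 1/k`. -/
def mShape0 {α : Type} [MeasurableSpace α] (ν : Measure α) (μ : Measure (α × α)) (k : ℕ) :
    Set (Matrix (Fin k) (Fin k) ℝ) :=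
  {M | ∃ f : Fin k → α → ℝ,
    (∀ i, Measurable (f i)) ∧ (∀ i x, 0 ≤ f i x) ∧ (∀ x, ∑ i, f i x = 1) ∧
    (∀ i, ∫ x, f i x ∂ν = 1 / k) ∧
    (∀ i j, M i j = ∫ p, f i p.1 * f j p.2 ∂μ)}

/-- `C(μ,k)`: the topological closure of `C₀(μ,k)`. -/
def mShape {α : Type} [MeasurableSpace α] (ν : Measure α) (μ : Measure (α × α)) (k : ℕ) :
    Set (Matrix (Fin k) (Fin k) ℝ) := closure (mShape0 ν μ k)

/-- `C_c(μ,k)`: as `C₀(μ,k)` but with continuous witness functions. -/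
def mShapeC (ν : Measure Cantor) (μ : Measure (Cantor × Cantor)) (k : ℕ) :
    Set (Matrix (Fin k) (Fin k) ℝ) :=
  {M | ∃ f : Fin k → Cantor → ℝ,
    (∀ i, Continuous (f i)) ∧ (∀ i x, 0 ≤ f i x) ∧ (∀ x, ∑ i, f i x = 1) ∧
    (∀ i, ∫ x, f i x ∂ν = 1 / k) ∧
    (∀ i j, M i j = ∫ p, f i p.1 * f j p.2 ∂μ)}

open Classical in
/-- The real adjacency matrix of a simple graph. -/
def adjMat {V : Type} [Fintype V] (G : SimpleGraph V) : Matrix V V ℝ :=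
  fun a b => if G.Adj a b then 1 else 0

/-- `C₀(G,k) = ‖A_G‖₁⁻¹ ⬝ C(A_G,k)` for a finite graph `G`. -/
def graphShape {V : Type} [Fintype V] (G : SimpleGraph V) (k : ℕ) :
    Set (Matrix (Fin k) (Fin k) ℝ) :=
  (gamma (adjMat G))⁻¹ • matShape (adjMat G) k

/-- `K̂(k,m)`: characteristic matrices of balanced partitions of `{1,…,m}` into `k` classes. -/
def Khat (k m : ℕ) : Set (Matrix (Fin k) (Fin m) ℝ) :=
  {M | (∀ i j, M i j = 0 ∨ M i j = 1) ∧ (∀ j, ∑ i, M i j = 1) ∧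
       (∀ i, ∑ j, M i j = (⌈(m : ℝ) / k⌉₊ : ℝ) ∨ ∑ j, M i j = (⌊(m : ℝ) / k⌋₊ : ℝ))}

/-- `C̃₀(μ,α)`: matrices coming from a measurable partition of unity with `∫ fᵢ dν = αᵢ`. -/
def tShape0 {α : Type} [MeasurableSpace α] (ν : Measure α) (μ : Measure (α × α)) {m : ℕ}
    (a : Fin m → ℝ) : Set (Matrix (Fin m) (Fin m) ℝ) :=
  {M | ∃ f : Fin m → α → ℝ,
    (∀ i, Measurable (f i)) ∧ (∀ i x, 0 ≤ f i x) ∧ (∀ x, ∑ i, f i x = 1) ∧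
    (∀ i, ∫ x, f i x ∂ν = a i) ∧
    (∀ i j, M i j = ∫ p, f i p.1 * f j p.2 ∂μ)}

/-- `C̃(μ,α)`: the topological closure of `C̃₀(μ,α)`. -/
def tShape {α : Type} [MeasurableSpace α] (ν : Measure α) (μ : Measure (α × α)) {m : ℕ}
    (a : Fin m → ℝ) : Set (Matrix (Fin m) (Fin m) ℝ) := closure (tShape0 ν μ a)

/-- The Hausdorff distance w.r.t. the entrywise ℓ∞ norm between `A` and `B` is at most `ε`. -/
def hdistInfLE {m : ℕ} (A B : Set (Matrix (Fin m) (Fin m) ℝ)) (ε : ℝ) : Prop :=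
  (∀ X ∈ A, ∃ Y ∈ B, ∀ i j, |X i j - Y i j| ≤ ε) ∧
  (∀ Y ∈ B, ∃ X ∈ A, ∀ i j, |X i j - Y i j| ≤ ε)

lemma mem_Kset_mul {r k : ℕ} {I : Type} [Fintype I] (hk : 0 < k) (hr : 0 < r)
    {N : Matrix (Fin r) (Fin k) ℝ} {M : Matrix (Fin k) I ℝ}
    (hN : N ∈ Kset r (Fin k)) (hM : M ∈ Kset k I) : N * M ∈ Kset r I := by
  obtain ⟨hN0, hNr, hNc⟩ := hN
  obtain ⟨hM0, hMr, hMc⟩ := hM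
  simp only [Fintype.card_fin] at hNr
  refine ⟨fun i j => ?_, fun i => ?_, fun j => ?_⟩
  · rw [Matrix.mul_apply]
    exact Finset.sum_nonneg fun l _ => mul_nonneg (hN0 i l) (hM0 l j)
  · have : ∑ j, (N * M) i j = ∑ l, N i l * ∑ j, M l j := by
      simp only [Matrix.mul_apply, Finset.mul_sum]
      rw [Finset.sum_comm]
    rw [this]
    simp only [hMr]
    rw [← Finset.sum_mul, hNr i]
    have hk' : (k : ℝ) ≠ 0 := Nat.cast_ne_zero.mpr hk.ne'
    have hr' : (r : ℝ) ≠ 0 := Nat.cast_ne_zero.mpr hr.ne'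
    field_simp
  · have : ∑ i, (N * M) i j = ∑ l, (∑ i, N i l) * M l j := by
      simp only [Matrix.mul_apply]
      rw [Finset.sum_comm]
      simp [Finset.sum_mul]
    rw [this]
    simp only [hNc, one_mul]
    exact hMc j

lemma maps_mShape0 (ν : Measure Cantor) (hν : IsCoinMeasure ν)
    (μ : Measure (Cantor × Cantor)) (hfin : IsFiniteMeasure μ)
    {k r : ℕ} (hk : 0 < k) (hr : 0 < r)
    {N : Matrix (Fin r) (Fin k) ℝ} (hN : N ∈ Kset r (Fin k)) :
    Set.MapsTo (fun X => N * X * Nᵀ) (mShape0 ν μ k) (mShape0 ν μ r) := by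
  obtain ⟨hN0, hNr, hNc⟩ := hN
  simp only [Fintype.card_fin] at hNr
  rintro X ⟨f, hfm, hf0, hfs, hfi, hfX⟩
  -- f is bounded by 1
  have f01 : ∀ i x, f i x ≤ 1 := by
    intro i x
    calc f i x ≤ ∑ j, f j x :=
          Finset.single_le_sum (fun j _ => hf0 j x) (Finset.mem_univ i)
      _ = 1 := hfs x
  have hprob : IsProbabilityMeasure ν := hν.1
  -- integrability facts
  have hIμ : ∀ l m : Fin k, Integrable (fun p : Cantor × Cantor => f l p.1 * f m p.2) μ := by
    intro l m
    refine (integrable_const (1 : ℝ)).mono'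
      (((hfm l).comp measurable_fst).mul ((hfm m).comp measurable_snd)).aestronglyMeasurable
      (Filter.Eventually.of_forall fun p => ?_)
    rw [Real.norm_eq_abs, abs_of_nonneg (mul_nonneg (hf0 _ _) (hf0 _ _))]
    exact mul_le_one₀ (f01 _ _) (hf0 _ _) (f01 _ _)
  have hIν : ∀ l : Fin k, Integrable (f l) ν := by
    intro l
    refine (integrable_const (1 : ℝ)).mono' (hfm l).aestronglyMeasurable
      (Filter.Eventually.of_forall fun x => ?_)
    rw [Real.norm_eq_abs, abs_of_nonneg (hf0 _ _)]
    exact f01 _ _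
  refine ⟨fun i x => ∑ l, N i l * f l x, fun i => ?_, fun i x => ?_, fun x => ?_,
    fun i => ?_, fun i j => ?_⟩
  · exact Finset.measurable_sum _ fun l _ => (hfm l).const_mul _
  · exact Finset.sum_nonneg fun l _ => mul_nonneg (hN0 i l) (hf0 l x)
  · rw [Finset.sum_comm]
    have : ∀ l, ∑ i, N i l * f l x = f l x := by
      intro l; rw [← Finset.sum_mul, hNc l, one_mul]
    simp [this, hfs x]
  · rw [integral_finset_sum _ fun l _ => (hIν l).const_mul _]
    simp only [integral_const_mul, hfi]
    rw [← Finset.sum_mul, hNr i]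
    have hk' : (k : ℝ) ≠ 0 := Nat.cast_ne_zero.mpr hk.ne'
    have hr' : (r : ℝ) ≠ 0 := Nat.cast_ne_zero.mpr hr.ne'
    field_simp
  · have key : (fun p : Cantor × Cantor => (∑ l, N i l * f l p.1) * ∑ m, N j m * f m p.2)
        = fun p => ∑ l, ∑ m, (N i l * N j m) * (f l p.1 * f m p.2) := by
      funext p
      rw [Finset.sum_mul_sum]
      exact Finset.sum_congr rfl fun l _ => Finset.sum_congr rfl fun m _ => by ring
    rw [key, integral_finset_sum _ fun l _ =>
        integrable_finset_sum _ fun m _ => (hIμ l m).const_mul _]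
    have : ∀ l : Fin k, (∫ p, ∑ m, (N i l * N j m) * (f l p.1 * f m p.2) ∂μ)
        = ∑ m, (N i l * N j m) * X l m := by
      intro l
      rw [integral_finset_sum _ fun m _ => (hIμ l m).const_mul _]
      exact Finset.sum_congr rfl fun m _ => by rw [integral_const_mul, hfX l m]
    simp only [this]
    simp only [Matrix.mul_apply, Matrix.transpose_apply, Finset.sum_mul]
    rw [Finset.sum_comm]
    exact Finset.sum_congr rfl fun l _ => Finset.sum_congr rfl fun m _ => by ring

/-- `C(C(μ,k),r) ⊆ C(μ,r)` for a finite Borel measure `μ` on `𝒞 × 𝒞`;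
in particular `C(C(S,k),r) ⊆ C(S,r)` for every nonnegative square matrix `S`. -/
theorem stmt_10 (ν : Measure Cantor) (hν : IsCoinMeasure ν)
    (μ : Measure (Cantor × Cantor)) (hfin : IsFiniteMeasure μ)
    (k r : ℕ) (hk : 0 < k) (hr : 0 < r) :
    (⋃ X ∈ mShape ν μ k, matShape X r) ⊆ mShape ν μ r ∧
      ∀ (n : ℕ) (S : Matrix (Fin n) (Fin n) ℝ), (∀ i j, 0 ≤ S i j) →
        (⋃ X ∈ matShape S k, matShape X r) ⊆ matShape S r := by
  constructor
  · intro Y hY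
    simp only [Set.mem_iUnion] at hY
    obtain ⟨X, hX, N, hN, rfl⟩ := hY
    have hcont : Continuous fun Z : Matrix (Fin k) (Fin k) ℝ => N * Z * Nᵀ :=
      (continuous_const.matrix_mul continuous_id).matrix_mul continuous_const
    exact map_mem_closure (f := fun Z => N * Z * Nᵀ) hcont hX (maps_mShape0 ν hν μ hfin hk hr hN)
  · intro n S _ Y hY
    simp only [Set.mem_iUnion] at hY
    obtain ⟨X, ⟨M, hM, rfl⟩, N, hN, rfl⟩ := hY
    exact ⟨N * M, mem_Kset_mul hk hr hN hM,
      by simp [Matrix.transpose_mul, Matrix.mul_assoc]⟩
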